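/- The Fourier representation of the smeared density for the Gaussian form factor recovers a Gaussian: (1/(2π²)) ∫₀^∞ k sin(kr)/(r e^{ℓ²k²}) dk = e^{-r²/(4ℓ²)}/(8π^{3/2}ℓ³) for all r > 0. -/

import Mathlib

open Real MeasureTheory

open Set Filter in
private lemma integrable_cos_gauss (a r : ℝ) (ha : 0 < a) :
    Integrable fun x : ℝ => Real.cos (x * r) * Real.exp (-a * x ^ 2) := by
  refine (integrable_exp_neg_mul_sq ha).mono' ?_ ?_
  · exact (Real.continuous_cos.comp (continuous_id.mul continuous_const)).mul
      (Real.continuous_exp.comp ((continuous_const.mul (continuous_pow 2)))) |>.aestronglyMeasurable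
  · filter_upwards with x
    rw [Real.norm_eq_abs, abs_mul, Real.abs_exp]
    have h1 := abs_le.mpr ⟨Real.neg_one_le_cos (x * r), Real.cos_le_one (x * r)⟩
    have h2 := Real.exp_pos (-a * x ^ 2)
    nlinarith [mul_le_mul_of_nonneg_right h1 h2.le]

open Set Filter in
private lemma integrable_id_sin_gauss (a r : ℝ) (ha : 0 < a) :
    Integrable fun x : ℝ => x * Real.sin (x * r) * Real.exp (-a * x ^ 2) := by
  refine (integrable_mul_exp_neg_mul_sq ha).abs.mono' ?_ ?_
  · exact ((continuous_id.mul (Real.continuous_sin.comp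
      (continuous_id.mul continuous_const))).mul
      (Real.continuous_exp.comp ((continuous_const.mul (continuous_pow 2))))).aestronglyMeasurable
  · filter_upwards with x
    rw [Real.norm_eq_abs, abs_mul, abs_mul, abs_mul, Real.abs_exp]
    have h1 := abs_le.mpr ⟨Real.neg_one_le_sin (x * r), Real.sin_le_one (x * r)⟩
    have h2 := Real.exp_pos (-a * x ^ 2)
    nlinarith [mul_le_mul_of_nonneg_right (mul_le_mul_of_nonneg_left h1 (abs_nonneg x)) h2.le]

open Set Filter Complex in
private lemma cos_gauss_integral (a r : ℝ) (ha : 0 < a) :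
    ∫ x : ℝ, Real.cos (x * r) * Real.exp (-a * x ^ 2) =
      Real.sqrt (π / a) * Real.exp (-r ^ 2 / (4 * a)) := by
  have hb : (0 : ℝ) < ((a : ℂ)).re := by simpa using ha
  have key := fourierIntegral_gaussian (b := (a : ℂ)) hb (r : ℂ)
  have hint : Integrable fun x : ℝ =>
      Complex.exp (Complex.I * (r : ℂ) * (x : ℂ)) * Complex.exp (-(a : ℂ) * (x : ℂ) ^ 2) := by
    refine (integrable_cexp_quadratic hb (Complex.I * r) 0).congr
      (Filter.Eventually.of_forall fun x => ?_)
    simp only [← Complex.exp_add]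
    congr 1
    ring
  have hre := congrArg Complex.re key
  have hint2 := integral_re (𝕜 := ℂ) hint
  simp only [RCLike.re_to_complex] at hint2
  rw [← hint2] at hre
  have hL : ∀ x : ℝ,
      (Complex.exp (Complex.I * (r : ℂ) * (x : ℂ)) * Complex.exp (-(a : ℂ) * (x : ℂ) ^ 2)).re
        = Real.cos (x * r) * Real.exp (-a * x ^ 2) := by
    intro x
    rw [← Complex.exp_add,
      show Complex.I * (r : ℂ) * (x : ℂ) + -(a : ℂ) * (x : ℂ) ^ 2
        = ((-a * x ^ 2 : ℝ) : ℂ) + ((r * x : ℝ) : ℂ) * Complex.I by push_cast; ring,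
      Complex.exp_re]
    simp only [Complex.add_re, Complex.ofReal_re, Complex.mul_re, Complex.I_re, Complex.I_im,
      Complex.ofReal_im, Complex.add_im, Complex.mul_im]
    rw [mul_comm x r]
    ring
  have hR : (((π : ℂ) / (a : ℂ)) ^ (1 / 2 : ℂ) * Complex.exp (-(r : ℂ) ^ 2 / (4 * (a : ℂ)))).re
      = Real.sqrt (π / a) * Real.exp (-r ^ 2 / (4 * a)) := by
    have e1 : ((π : ℂ) / (a : ℂ)) ^ (1 / 2 : ℂ) = ((Real.sqrt (π / a) : ℝ) : ℂ) := by
      rw [Real.sqrt_eq_rpow]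
      rw [Complex.ofReal_cpow (by positivity : (0:ℝ) ≤ π / a)]
      push_cast
      norm_num
    have e2 : Complex.exp (-(r : ℂ) ^ 2 / (4 * (a : ℂ)))
        = ((Real.exp (-r ^ 2 / (4 * a)) : ℝ) : ℂ) := by
      rw [Complex.ofReal_exp]
      congr 1
      push_cast
      ring
    rw [e1, e2, ← Complex.ofReal_mul, Complex.ofReal_re]
  simp_rw [hL] at hre
  rw [hre, hR]

open Set Filter in
private lemma cos_gauss_Ioi (a r : ℝ) (ha : 0 < a) (hr : 0 ≤ r) :
    ∫ x in Ioi (0 : ℝ), Real.cos (x * r) * Real.exp (-a * x ^ 2) =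
      (1 / 2) * (Real.sqrt (π / a) * Real.exp (-r ^ 2 / (4 * a))) := by
  have heven : ∀ x : ℝ, Real.cos (|x| * r) * Real.exp (-a * |x| ^ 2)
      = Real.cos (x * r) * Real.exp (-a * x ^ 2) := by
    intro x
    rw [sq_abs, show |x| * r = |x * r| by rw [abs_mul, abs_of_nonneg hr], Real.cos_abs]
  have h := integral_comp_abs (f := fun x => Real.cos (x * r) * Real.exp (-a * x ^ 2))
  simp_rw [heven] at h
  rw [cos_gauss_integral a r ha] at h
  linarith

open Set Filter in
private lemma sin_gauss_Ioi (a r : ℝ) (ha : 0 < a) (hr : 0 < r) :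
    ∫ k in Ioi (0 : ℝ), k * Real.sin (k * r) * Real.exp (-a * k ^ 2) =
      (r / (2 * a)) * ((1 / 2) * (Real.sqrt (π / a) * Real.exp (-r ^ 2 / (4 * a)))) := by
  set F : ℝ → ℝ := fun k => -(1 / (2 * a)) * Real.exp (-a * k ^ 2) * Real.sin (k * r) with hF
  have hderiv : ∀ k : ℝ, HasDerivAt F
      (k * Real.sin (k * r) * Real.exp (-a * k ^ 2)
        - r / (2 * a) * (Real.cos (k * r) * Real.exp (-a * k ^ 2))) k := by
    intro k
    have d1 : HasDerivAt (fun k : ℝ => -a * k ^ 2) (-a * (2 * k)) k := by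
      simpa [mul_comm] using (hasDerivAt_pow 2 k).const_mul (-a)
    have d2 : HasDerivAt (fun k : ℝ => Real.exp (-a * k ^ 2))
        (Real.exp (-a * k ^ 2) * (-a * (2 * k))) k := d1.exp
    have d3 : HasDerivAt (fun k : ℝ => Real.sin (k * r)) (Real.cos (k * r) * r) k :=
      (hasDerivAt_mul_const r).sin
    have := (d2.const_mul (-(1 / (2 * a)))).mul d3
    refine this.congr_deriv ?_
    have h2a : 1 / (2 * a) * (2 * a) = 1 := one_div_mul_cancel (by positivity)
    linear_combination ((k * Real.sin (k * r) * Real.exp (-a * k ^ 2))) * h2a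
  have int1 := (integrable_id_sin_gauss a r ha).integrableOn (s := Ioi (0 : ℝ))
  have int2 := ((integrable_cos_gauss a r ha).const_mul (r / (2 * a))).integrableOn
    (s := Ioi (0 : ℝ))
  have htend : Tendsto F atTop (nhds 0) := by
    have he : Tendsto (fun k : ℝ => Real.exp (-a * k ^ 2)) atTop (nhds 0) := by
      apply Real.tendsto_exp_atBot.comp
      have h1 : Tendsto (fun k : ℝ => a * k ^ 2) atTop atTop :=
        (tendsto_pow_atTop (two_ne_zero)).const_mul_atTop ha
      have h2 := tendsto_neg_atTop_atBot.comp h1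
      simpa [Function.comp_def, neg_mul] using h2
    have : Tendsto (fun k : ℝ => (1 / (2 * a)) * Real.exp (-a * k ^ 2)) atTop (nhds 0) := by
      simpa using he.const_mul (1 / (2 * a))
    apply squeeze_zero_norm _ this
    intro k
    rw [hF]
    rw [Real.norm_eq_abs, abs_mul, abs_mul, abs_neg, abs_of_nonneg (by positivity : (0:ℝ) ≤ 1 / (2*a)), Real.abs_exp]
    have h1 := abs_le.mpr ⟨Real.neg_one_le_sin (k * r), Real.sin_le_one (k * r)⟩
    have h2 := Real.exp_pos (-a * k ^ 2)
    nlinarith [mul_le_mul_of_nonneg_left h1 (mul_nonneg (by positivity : (0:ℝ) ≤ 1 / (2 * a)) h2.le)]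
  have key := integral_Ioi_of_hasDerivAt_of_tendsto' (a := (0:ℝ))
    (fun x _ => hderiv x) (int1.sub int2) htend
  have hF0 : F 0 = 0 := by simp [hF]
  rw [hF0, sub_zero] at key
  rw [MeasureTheory.integral_sub int1 int2] at key
  have hc := cos_gauss_Ioi a r ha hr.le
  rw [MeasureTheory.integral_const_mul] at key
  have := sub_eq_zero.mp key
  rw [this, hc]

theorem stmt_15 (ℓ r : ℝ) (hℓ : 0 < ℓ) (hr : 0 < r) :
    (1 / (2 * π ^ 2)) * ∫ k in Set.Ioi (0 : ℝ),
        k * Real.sin (k * r) / (r * Real.exp (ℓ ^ 2 * k ^ 2)) =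
      Real.exp (-r ^ 2 / (4 * ℓ ^ 2)) / (8 * π ^ ((3 : ℝ) / 2) * ℓ ^ 3) := by
  have ha : 0 < ℓ ^ 2 := by positivity
  have hpt : ∀ k : ℝ, k * Real.sin (k * r) / (r * Real.exp (ℓ ^ 2 * k ^ 2))
      = (k * Real.sin (k * r) * Real.exp (-ℓ ^ 2 * k ^ 2)) * r⁻¹ := by
    intro k
    rw [neg_mul, Real.exp_neg, div_eq_mul_inv, mul_inv]
    ring
  simp_rw [hpt]
  rw [MeasureTheory.integral_mul_const, sin_gauss_Ioi (ℓ ^ 2) r ha hr]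
  have hsq : Real.sqrt (π / ℓ ^ 2) = Real.sqrt π / ℓ := by
    rw [Real.sqrt_div Real.pi_pos.le, Real.sqrt_sq hℓ.le]
  rw [hsq]
  have hpi : Real.sqrt π * π ^ ((3 : ℝ) / 2) = π ^ 2 := by
    rw [Real.sqrt_eq_rpow, ← Real.rpow_add Real.pi_pos, ← Real.rpow_two]
    norm_num
  have hπ3 : (0 : ℝ) < π ^ ((3 : ℝ) / 2) := Real.rpow_pos_of_pos Real.pi_pos _
  field_simp
  linear_combination 8 * hpi
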